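/- Let B = ℂ[x,y], regarded as an algebra over R = ℂ[t] via the ℂ-algebra map t ↦ xy. The map δ = x∂ₓ − y∂_y is an R-linear derivation of B (it kills xy), and it induces a B-linear map λ : Ω_{B/R} → B on Kähler differentials with λ(dx) = x and λ(dy) = −y. Then λ is injective and its image is exactly the ideal (x, y) of B. -/

import Mathlib

/-!
STATEMENT 2. Let `B = ℂ[x,y]` over `R = ℂ[t]` via `t ↦ xy`. The derivation
`δ = x∂ₓ − y∂_y` is `R`-linear and induces a `B`-linear map `λ : Ω_{B/R} → B` with
`λ(dx) = x`, `λ(dy) = −y`. Then `λ` is injective with image exactly the ideal `(x,y)`.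
-/

open MvPolynomial

noncomputable section

/-- The polynomial ring `B = ℂ[x,y]`, with `x = X 0`, `y = X 1`. -/
abbrev B : Type := MvPolynomial (Fin 2) ℂ

/-- `B` as an algebra over `R = ℂ[t]` via `t ↦ xy`. -/
instance : Algebra (Polynomial ℂ) B :=
  (Polynomial.aeval (X 0 * X 1 : B)).toRingHom.toAlgebra

lemma algB (p : Polynomial ℂ) :
    algebraMap (Polynomial ℂ) B p = Polynomial.aeval (X 0 * X 1 : B) p := rfl

/-- The `ℂ`-derivation `x∂ₓ − y∂_y` of `B`. -/
def del0 : Derivation ℂ B B := mkDerivation ℂ ![X 0, -X 1]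

lemma del0_X0 : del0 (X 0) = X 0 := by
  simp [del0, mkDerivation_X]

lemma del0_X1 : del0 (X 1) = -X 1 := by
  simp [del0, mkDerivation_X]

lemma del0_xy : del0 (X 0 * X 1) = 0 := by
  rw [Derivation.leibniz, del0_X0, del0_X1]
  simp [smul_eq_mul]
  ring

lemma del0_alg (p : Polynomial ℂ) : del0 (algebraMap (Polynomial ℂ) B p) = 0 := by
  rw [algB]
  induction p using Polynomial.induction_on with
  | C a => simp [del0.map_algebraMap (R := ℂ) a]
  | add p q hp hq => rw [map_add, map_add, hp, hq, add_zero]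
  | monomial n a _ =>
      rw [map_mul, map_pow, Polynomial.aeval_X, Polynomial.aeval_C, Derivation.leibniz,
        Derivation.leibniz_pow, del0_xy]
      simp

/-- `del0` as an `R = ℂ[t]`-linear derivation (it kills `xy`). -/
def delR : Derivation (Polynomial ℂ) B B where
  toFun := del0
  map_add' := map_add del0
  map_smul' := fun r b => by
    show del0 (r • b) = r • del0 b
    rw [Algebra.smul_def r b, Derivation.leibniz, del0_alg, smul_zero, add_zero, smul_eq_mul]
    rfl
  map_one_eq_zero' := del0.map_one_eq_zero
  leibniz' := del0.leibniz

lemma delR_apply (b : B) : delR b = del0 b := rfl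

lemma prime_X0 : Prime (X 0 : B) := by
  rw [← MulEquiv.prime_iff (MvPolynomial.finSuccEquiv ℂ 1).toRingEquiv.toMulEquiv]
  show Prime (MvPolynomial.finSuccEquiv ℂ 1 (X 0))
  rw [finSuccEquiv_X_zero]
  exact Polynomial.prime_X

lemma X0_not_dvd_X1 : ¬ (X 0 : B) ∣ X 1 := by
  rintro ⟨c, hc⟩
  have := congrArg (MvPolynomial.eval (fun i : Fin 2 => if i = 0 then 0 else 1)) hc
  simp at this

theorem differentials_to_dualizing_injective :
    ∃ δ : Derivation (Polynomial ℂ) B B,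
      δ (X 0) = X 0 ∧ δ (X 1) = -X 1 ∧
      Function.Injective δ.liftKaehlerDifferential ∧
      LinearMap.range δ.liftKaehlerDifferential = (Ideal.span {X 0, X 1} : Ideal B) := by
  classical
  set D := KaehlerDifferential.D (Polynomial ℂ) B with hD
  set lam := delR.liftKaehlerDifferential with hlam
  have hlx : lam (D (X 0)) = X 0 := by
    rw [hlam, Derivation.liftKaehlerDifferential_comp_D, delR_apply, del0_X0]
  have hly : lam (D (X 1)) = -X 1 := by
    rw [hlam, Derivation.liftKaehlerDifferential_comp_D, delR_apply, del0_X1]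
  -- d(xy) = 0 in Ω_{B/R}
  have hxy : (X 0 : B) * X 1 = algebraMap (Polynomial ℂ) B Polynomial.X := by
    rw [algB, Polynomial.aeval_X]
  have hDxy : (X 1 : B) • D (X 0) + (X 0 : B) • D (X 1) = 0 := by
    have h0 : D ((X 0 : B) * X 1) = 0 := by
      rw [hxy, Derivation.map_algebraMap]
    rw [Derivation.leibniz] at h0
    rw [add_comm]; exact h0
  -- every element of Ω is f • dx + g • dy
  have hspan : ∀ b : B, D b ∈ Submodule.span B {D (X 0), D (X 1)} := by
    intro b
    induction b using MvPolynomial.induction_on with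
    | C a =>
        have : (MvPolynomial.C a : B) = algebraMap (Polynomial ℂ) B (Polynomial.C a) := by
          rw [algB, Polynomial.aeval_C]; rfl
        rw [this, Derivation.map_algebraMap]; exact Submodule.zero_mem _
    | add p q hp hq => rw [map_add]; exact Submodule.add_mem _ hp hq
    | mul_X p i hp =>
        rw [Derivation.leibniz]
        refine Submodule.add_mem _ (Submodule.smul_mem _ _ (Submodule.subset_span ?_))
          (Submodule.smul_mem _ _ hp)
        fin_cases i
        · exact Set.mem_insert _ _
        · exact Set.mem_insert_of_mem _ rfl
  have hrep : ∀ ω : Ω[B⁄Polynomial ℂ], ∃ f g : B, ω = f • D (X 0) + g • D (X 1) := by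
    intro ω
    have hmem : ω ∈ Submodule.span B {D (X 0), D (X 1)} := by
      have htop : (⊤ : Submodule B (Ω[B⁄Polynomial ℂ])) ≤
          Submodule.span B {D (X 0), D (X 1)} := by
        rw [← KaehlerDifferential.span_range_derivation, Submodule.span_le]
        rintro _ ⟨b, rfl⟩
        exact hspan b
      exact htop Submodule.mem_top
    rw [Submodule.mem_span_pair] at hmem
    obtain ⟨f, g, h⟩ := hmem
    exact ⟨f, g, h.symm⟩
  refine ⟨delR, by rw [delR_apply, del0_X0], by rw [delR_apply, del0_X1], ?_, ?_⟩
  · -- injectivity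
    rw [← hlam, ← LinearMap.ker_eq_bot, eq_bot_iff]
    intro ω hω
    have hω0 : lam ω = 0 := hω
    obtain ⟨f, g, rfl⟩ := hrep ω
    rw [map_add, map_smul, map_smul, hlx, hly, smul_eq_mul, smul_eq_mul] at hω0
    have heq : f * X 0 = g * X 1 := by linear_combination hω0
    have hdvd : (X 0 : B) ∣ g := by
      have : (X 0 : B) ∣ g * X 1 := ⟨f, by rw [← heq]; ring⟩
      rcases (prime_X0.2.2 g (X 1) this) with h | h
      · exact h
      · exact absurd h X0_not_dvd_X1
    obtain ⟨h, rfl⟩ := hdvd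
    have hf : f = X 1 * h := by
      have hx0 : (X 0 : B) ≠ 0 := prime_X0.1 ∘ fun h => by simp [h]
      apply mul_left_cancel₀ hx0
      calc X 0 * f = f * X 0 := by ring
        _ = X 0 * h * X 1 := heq
        _ = X 0 * (X 1 * h) := by ring
    rw [hf, mul_smul, mul_comm (X 0 : B) h, mul_smul, smul_comm (X 1 : B) h,
      ← smul_add, hDxy, smul_zero]
    exact Submodule.zero_mem _
  · -- range
    rw [← hlam]
    apply le_antisymm
    · rintro _ ⟨ω, rfl⟩
      obtain ⟨f, g, rfl⟩ := hrep ω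
      rw [map_add, map_smul, map_smul, hlx, hly]
      refine Submodule.add_mem _ (Submodule.smul_mem _ _ (Ideal.subset_span ?_))
        (Submodule.smul_mem _ _ (Submodule.neg_mem _ (Ideal.subset_span ?_)))
      · exact Set.mem_insert _ _
      · exact Set.mem_insert_of_mem _ rfl
    · rw [Ideal.span_le]
      rintro z (rfl | rfl)
      · exact ⟨D (X 0), hlx⟩
      · exact ⟨-(D (X 1)), by rw [map_neg, hly, neg_neg]⟩

end
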